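/- Let p be an odd prime and G a finite group with p-core V and W = V^p·[V,V]. Then G is x₀-constrained if and only if the quotient group G/W is x₀-constrained. -/

import Mathlib

open scoped Pointwise

/-- The `p`-core of `G`: the intersection of all Sylow `p`-subgroups. -/
def pCore (p : ℕ) (G : Type*) [Group G] : Subgroup G :=
  ⨅ P : Sylow p G, (P : Subgroup G)

instance pCore_normal (p : ℕ) (G : Type*) [Group G] : (pCore p G).Normal := by
  constructor
  intro x hx g
  rw [pCore, Subgroup.mem_iInf] at hx ⊢
  intro P
  have h := hx (g⁻¹ • P)
  rw [Sylow.coe_subgroup_smul, Subgroup.mem_pointwise_smul_iff_inv_smul_mem] at h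
  simpa [MulAut.conj] using h

/-- `W = V^p⋅[V,V]`, the Frattini subgroup of the `p`-core `V`, as a subgroup of `G`. -/
def pFrattini (p : ℕ) (G : Type*) [Group G] : Subgroup G :=
  Subgroup.closure ((fun v => v ^ p) '' (pCore p G : Set G)) ⊔ ⁅pCore p G, pCore p G⁆

instance pFrattini_normal (p : ℕ) (G : Type*) [Group G] : (pFrattini p G).Normal := by
  have h1 : (Subgroup.closure ((fun v => v ^ p) '' (pCore p G : Set G))).Normal := by
    constructor
    intro x hx g
    induction hx using Subgroup.closure_induction'' with
    | one => simpa using Subgroup.one_mem _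
    | mem y hy =>
        obtain ⟨v, hv, rfl⟩ := hy
        refine Subgroup.subset_closure ⟨g * v * g⁻¹, (pCore_normal p G).conj_mem v hv g, ?_⟩
        simp [conj_pow]
    | inv_mem y hy =>
        obtain ⟨v, hv, rfl⟩ := hy
        have : g * (v ^ p)⁻¹ * g⁻¹ = ((g * v * g⁻¹) ^ p)⁻¹ := by
          rw [conj_pow]; group
        rw [this]
        exact Subgroup.inv_mem _ (Subgroup.subset_closure
          ⟨g * v * g⁻¹, (pCore_normal p G).conj_mem v hv g, by simp [conj_pow]⟩)
    | mul y z _ _ hy hz =>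
        have : g * (y * z) * g⁻¹ = (g * y * g⁻¹) * (g * z * g⁻¹) := by group
        rw [this]
        exact Subgroup.mul_mem _ hy hz
  have h2 : (⁅pCore p G, pCore p G⁆ : Subgroup G).Normal := Subgroup.commutator_normal _ _
  exact Subgroup.sup_normal _ _

/-- `⟨x, y⟩ = (x^{h^{p-1}} y ⋅ x^{h^{p-2}} y ⋯ x^{h} y)^{a}`. -/
def tameBracket (p : ℕ) (h a : ℤ) {G : Type*} [Group G] (x y : G) : G :=
  (((List.range (p - 1)).map fun i => x ^ (h ^ (p - 1 - i)) * y).prod) ^ a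

/-- Membership in `T_G`: the tame relation holds and the images of `σ, τ` generate `G/V`. -/
def MemTG (p : ℕ) {G : Type*} [Group G] (σ τ : G) : Prop :=
  σ⁻¹ * τ * σ = τ ^ p ∧ Subgroup.closure {σ, τ} ⊔ pCore p G = ⊤

/-- `G` is `x₀`-constrained if `x₀^σ⋅⟨x₀,τ⟩⁻¹ ∈ W` implies `x₀ ∈ W`,
for all `(σ,τ) ∈ T_G` and `x₀ ∈ V`. -/
def IsXConstrained (p : ℕ) (h a : ℤ) (G : Type*) [Group G] : Prop :=
  ∀ σ τ : G, MemTG p σ τ → ∀ x₀ ∈ pCore p G,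
    σ⁻¹ * x₀ * σ * (tameBracket p h a x₀ τ)⁻¹ ∈ pFrattini p G → x₀ ∈ pFrattini p G

open scoped IsMulCommutative in
/-- Abelian case of complement conjugacy: H¹ vanishing by averaging. -/
lemma conj_lift_abelian {G : Type*} [Group G] [Finite G] (A : Subgroup G)
    (hcomm : ∀ x ∈ A, ∀ y ∈ A, x * y = y * x)
    {t s : G} (ht : ∀ x ∈ A, t * x * t⁻¹ ∈ A) (ht' : ∀ x ∈ A, t⁻¹ * x * t ∈ A)
    (hu : s * t⁻¹ ∈ A) {m : ℕ} (hmA : Nat.Coprime m (Nat.card A))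
    (htm : t ^ m = 1) (hsm : s ^ m = 1) : ∃ z ∈ A, z * t * z⁻¹ = s := by
  haveI : IsMulCommutative A := ⟨⟨fun x y => Subtype.ext (hcomm x x.2 y y.2)⟩⟩
  set u : A := ⟨s * t⁻¹, hu⟩ with hu_def
  by_cases hu1 : u = 1
  · refine ⟨1, A.one_mem, ?_⟩
    have h1 : s * t⁻¹ = 1 := congrArg Subtype.val hu1
    rw [mul_inv_eq_one.mp h1]; group
  -- conjugation by t as an endomorphism of A
  set ψ : A →* A :=
    { toFun := fun x => ⟨t * x * t⁻¹, ht x x.2⟩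
      map_one' := by ext; simp
      map_mul' := fun x y => by ext; simp only [Subgroup.coe_mul]; group } with hψ
  have hψcoe : ∀ x : A, ((ψ x : A) : G) = t * x * t⁻¹ := fun _ => rfl
  -- the cocycle
  set a : ℕ → A := fun i => Nat.rec (1 : A) (fun _ ai => ψ ai * u) i with ha
  have ha0 : a 0 = 1 := rfl
  have hastep : ∀ i, a (i + 1) = ψ (a i) * u := fun _ => rfl
  have hts : t⁻¹ * s ∈ A := by
    have := ht' _ hu
    simpa [mul_assoc] using this
  have hacoe : ∀ i, (a i : G) = s ^ i * (t⁻¹) ^ i := by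
    intro i
    induction i with
    | zero => simp [ha0]
    | succ i ih =>
      have hcomm' : (a i : G) * (t⁻¹ * s) = (t⁻¹ * s) * (a i) :=
        hcomm _ (a i).2 _ hts
      have hco : ((a (i+1) : A) : G) = t * (a i) * t⁻¹ * (s * t⁻¹) := by
        rw [hastep]; rfl
      have key : t * (a i : G) * t⁻¹ * s = s * (a i) := by
        calc t * (a i : G) * t⁻¹ * s = t * ((a i : G) * (t⁻¹ * s)) := by group
        _ = t * (t⁻¹ * s * (a i)) := by rw [hcomm']
        _ = s * (a i) := by group
      rw [hco, pow_succ' s, pow_succ (t⁻¹)]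
      calc t * (a i : G) * t⁻¹ * (s * t⁻¹) = t * (a i : G) * t⁻¹ * s * t⁻¹ := by group
      _ = s * (a i) * t⁻¹ := by rw [key]
      _ = s * (s ^ i * t⁻¹ ^ i) * t⁻¹ := by rw [ih]
      _ = s * s ^ i * (t⁻¹ ^ i * t⁻¹) := by group
  have ham : a m = 1 := by
    ext
    rw [hacoe, inv_pow, htm, hsm]; simp
  set b : A := ∏ i ∈ Finset.range m, a i with hb
  have hψa : ∀ i, ψ (a i) = a (i + 1) * u⁻¹ := by
    intro i; rw [hastep]; group
  have hprod : ∏ i ∈ Finset.range m, a (i+1) = ∏ i ∈ Finset.range m, a i := by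
    have h1 := Finset.prod_range_succ' a m
    have h2 := Finset.prod_range_succ a m
    rw [ha0, mul_one] at h1
    rw [ham, mul_one] at h2
    rw [← h1, h2]
  have hψb : ψ b = b * u⁻¹ ^ m := by
    rw [hb, map_prod]
    calc ∏ i ∈ Finset.range m, ψ (a i) = ∏ i ∈ Finset.range m, (a (i+1) * u⁻¹) := by
          simp_rw [hψa]
    _ = (∏ i ∈ Finset.range m, a (i+1)) * u⁻¹ ^ m := by
          rw [Finset.prod_mul_distrib, Finset.prod_const, Finset.card_range]
    _ = b * u⁻¹ ^ m := by rw [hprod, hb]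
  have hkey : b * (ψ b)⁻¹ = u ^ m := by
    calc b * (ψ b)⁻¹ = b * ((u⁻¹ ^ m)⁻¹ * b⁻¹) := by rw [hψb, mul_inv_rev]
    _ = (u⁻¹ ^ m)⁻¹ * (b * b⁻¹) := by rw [mul_left_comm]
    _ = (u⁻¹ ^ m)⁻¹ := by rw [mul_inv_cancel, mul_one]
    _ = u ^ m := by rw [inv_pow, inv_inv]
  -- invert m modulo the order of u
  have hn1 : orderOf u ≠ 1 := fun h => hu1 (orderOf_eq_one_iff.mp h)
  have hn0 : orderOf u ≠ 0 := fun h => (orderOf_eq_zero_iff.mp h) (isOfFinOrder_of_finite u)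
  have hcop : Nat.Coprime m (orderOf u) :=
    Nat.Coprime.coprime_dvd_right (orderOf_dvd_natCard u) hmA
  obtain ⟨k, -, hk⟩ := Nat.exists_mul_mod_eq_one_of_coprime hcop
    (Nat.one_lt_iff_ne_zero_and_ne_one.mpr ⟨hn0, hn1⟩)
  set z : A := b ^ k with hz
  have hzeq : z * (ψ z)⁻¹ = u := by
    rw [hz, map_pow, ← inv_pow, ← mul_pow, hkey, ← pow_mul, ← pow_mod_orderOf, hk, pow_one]
  refine ⟨(z : G), z.2, ?_⟩
  have hco : (z : G) * (t * (z : G) * t⁻¹)⁻¹ = s * t⁻¹ := by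
    have := congrArg Subtype.val hzeq
    simpa [hψcoe] using this
  have := congrArg (· * t) hco
  calc (z : G) * t * (z : G)⁻¹ = (z : G) * (t * (z:G) * t⁻¹)⁻¹ * t := by group
  _ = s * t⁻¹ * t := by rw [hco]
  _ = s := by group

/-- Conjugacy lifting along a normal `p`-subgroup (Schur–Zassenhaus conjugacy,
cyclic complement case). -/
lemma conj_lift_aux (p : ℕ) [Fact p.Prime] :
    ∀ (n : ℕ) (G : Type*) [Group G] [Finite G] (W : Subgroup G) (_ : W.Normal)
      (_ : Nat.card W ≤ n) (_ : IsPGroup p W) (t s : G) (_ : s * t⁻¹ ∈ W)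
      (_ : ¬ p ∣ orderOf t) (_ : ¬ p ∣ orderOf s), ∃ w ∈ W, w * t * w⁻¹ = s := by
  intro n
  induction n with
  | zero =>
    intro G _ _ W _ hcard _ _ _ _ _ _
    exact absurd hcard (by simpa using Nat.card_pos.ne')
  | succ n ih =>
    intro G _ _ W hWn hcard hWp t s hst htp hsp
    by_cases hbot : W = ⊥
    · subst hbot
      refine ⟨1, Subgroup.one_mem _, ?_⟩
      rw [Subgroup.mem_bot, mul_inv_eq_one] at hst
      rw [hst]; group
    -- the center of W, as a subgroup of G
    haveI : Nontrivial W := Subgroup.nontrivial_iff_ne_bot W |>.mpr hbot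
    set Z : Subgroup G := (Subgroup.center W).map W.subtype with hZ
    have hZle : Z ≤ W := by
      rintro _ ⟨z, _, rfl⟩; exact z.2
    have hZmem : ∀ x, x ∈ Z ↔ ∃ hx : x ∈ W, ∀ y ∈ W, y * x = x * y := by
      intro x
      constructor
      · rintro ⟨z, hz, rfl⟩
        refine ⟨z.2, fun y hy => ?_⟩
        have := (Subgroup.mem_center_iff.mp hz) ⟨y, hy⟩
        exact congrArg Subtype.val this
      · rintro ⟨hx, hc⟩
        exact ⟨⟨x, hx⟩, Subgroup.mem_center_iff.mpr fun g => Subtype.ext (hc g g.2), rfl⟩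
    haveI hZn : Z.Normal := by
      constructor
      intro x hx g
      rw [hZmem] at hx ⊢
      obtain ⟨hxW, hxc⟩ := hx
      refine ⟨hWn.conj_mem x hxW g, fun y hy => ?_⟩
      have hy' : g⁻¹ * y * g ∈ W := by simpa using hWn.conj_mem y hy g⁻¹
      have := hxc _ hy'
      calc y * (g * x * g⁻¹) = g * ((g⁻¹ * y * g) * x) * g⁻¹ := by group
      _ = g * (x * (g⁻¹ * y * g)) * g⁻¹ := by rw [this]
      _ = g * x * g⁻¹ * y := by group
    have hZnontriv : Z ≠ ⊥ := by
      haveI := hWp.center_nontrivial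
      obtain ⟨⟨z, hzc⟩, hz1⟩ := exists_ne (1 : Subgroup.center W)
      intro h
      apply hz1
      have hzZ : (z : G) ∈ Z := ⟨z, hzc, rfl⟩
      rw [h, Subgroup.mem_bot] at hzZ
      exact Subtype.ext (Subtype.ext hzZ)
    -- pass to the quotient by Z
    set f := QuotientGroup.mk' Z with hf
    set W' : Subgroup (G ⧸ Z) := W.map f with hW'
    haveI hW'n : W'.Normal := hWn.map f (QuotientGroup.mk'_surjective Z)
    have hW'p : IsPGroup p W' := hWp.map f
    have hfsurj : Function.Surjective (f.subgroupMap W) := f.subgroupMap_surjective W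
    have hcard' : Nat.card W' < Nat.card W := by
      rcases lt_or_eq_of_le (Nat.card_le_card_of_surjective _ hfsurj) with h | h
      · exact h
      exfalso
      have hbij : Function.Bijective (f.subgroupMap W) :=
        (Nat.bijective_iff_surjective_and_card _).mpr ⟨hfsurj, h.symm⟩
      haveI : Nontrivial Z := (Subgroup.nontrivial_iff_ne_bot Z).mpr hZnontriv
      obtain ⟨z, hzZ, hz1⟩ := Subgroup.exists_ne_one_of_nontrivial Z
      have hfz : (f.subgroupMap W) ⟨z, hZle hzZ⟩ = 1 := by
        ext
        show f z = 1
        exact (QuotientGroup.eq_one_iff z).mpr hzZ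
      have : (⟨z, hZle hzZ⟩ : W) = 1 := hbij.1 (by rw [hfz, map_one])
      exact hz1 (Subtype.ext_iff.mp this)
    -- commutativity of Z
    have hZcomm : ∀ x ∈ Z, ∀ y ∈ Z, x * y = y * x := by
      intro x hx y hy
      obtain ⟨hxW, hxc⟩ := (hZmem x).mp hx
      exact (hxc y (hZle hy)).symm
    -- apply the inductive hypothesis in the quotient
    obtain ⟨wbar, hwbarW', hwbar⟩ := ih (G ⧸ Z) W' hW'n
      (Nat.lt_succ_iff.mp (lt_of_lt_of_le hcard' hcard)) hW'p (f t) (f s)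
      (by
        have : f s * (f t)⁻¹ = f (s * t⁻¹) := by rw [map_mul, map_inv]
        rw [this]
        exact Subgroup.mem_map.mpr ⟨s * t⁻¹, hst, rfl⟩)
      (fun hd => htp (hd.trans (orderOf_map_dvd f t)))
      (fun hd => hsp (hd.trans (orderOf_map_dvd f s)))
    obtain ⟨w, hwW, rfl⟩ := Subgroup.mem_map.mp hwbarW'
    set t' := w * t * w⁻¹ with ht'def
    have hordt' : orderOf t' = orderOf t := by
      have := orderOf_injective (MulAut.conj w).toMonoidHom (MulAut.conj w).injective t
      simpa [MulAut.conj_apply] using this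
    have hft' : f t' = f s := by
      rw [ht'def, map_mul, map_mul, map_inv]
      have : f.subgroupMap W ⟨w, hwW⟩ = ⟨f w, Subgroup.mem_map.mpr ⟨w, hwW, rfl⟩⟩ := rfl
      exact hwbar
    have hst' : s * t'⁻¹ ∈ Z := by
      have : f (s * t'⁻¹) = 1 := by rw [map_mul, map_inv, hft', mul_inv_cancel]
      exact (QuotientGroup.eq_one_iff _).mp this
    set m := orderOf t' * orderOf s with hm
    have hmp : ¬ p ∣ m := by
      intro hd
      rcases (Nat.Prime.dvd_mul Fact.out).mp hd with h | h
      · rw [hordt'] at h; exact htp h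
      · exact hsp h
    obtain ⟨k, hk⟩ := (hWp.to_le hZle).exists_card_eq
    have hcop : Nat.Coprime m (Nat.card Z) := by
      rw [hk]
      exact Nat.Coprime.pow_right k
        (((Nat.Prime.coprime_iff_not_dvd Fact.out).mpr hmp).symm)
    have htm : t' ^ m = 1 := by rw [hm, pow_mul, pow_orderOf_eq_one, one_pow]
    have hsm : s ^ m = 1 := by rw [hm, mul_comm, pow_mul, pow_orderOf_eq_one, one_pow]
    obtain ⟨z, hzZ, hz⟩ := conj_lift_abelian Z hZcomm
      (fun x hx => hZn.conj_mem x hx t')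
      (fun x hx => by simpa using hZn.conj_mem x hx t'⁻¹)
      hst' hcop htm hsm
    refine ⟨z * w, W.mul_mem (hZle hzZ) hwW, ?_⟩
    calc z * w * t * (z * w)⁻¹ = z * (w * t * w⁻¹) * z⁻¹ := by group
    _ = s := by rw [← ht'def, hz]


lemma conj_lift (p : ℕ) [Fact p.Prime] {G : Type*} [Group G] [Finite G]
    (W : Subgroup G) (hWn : W.Normal) (hWp : IsPGroup p W) {t s : G}
    (hst : s * t⁻¹ ∈ W) (htp : ¬ p ∣ orderOf t) (hsp : ¬ p ∣ orderOf s) :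
    ∃ w ∈ W, w * t * w⁻¹ = s :=
  conj_lift_aux p (Nat.card W) G W hWn le_rfl hWp t s hst htp hsp

section Core

variable (p : ℕ) [Fact p.Prime] (G : Type*) [Group G] [Finite G]

omit [Fact p.Prime] [Finite G] in
lemma pCore_isPGroup' : IsPGroup p (pCore p G) := by
  obtain ⟨P⟩ : Nonempty (Sylow p G) := inferInstance
  exact P.2.to_le (iInf_le _ P)

lemma le_pCore {N : Subgroup G} (hN : N.Normal) (h : IsPGroup p N) : N ≤ pCore p G := by
  rw [pCore, le_iInf_iff]
  intro P
  obtain ⟨Q, hQ⟩ := h.exists_le_sylow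
  obtain ⟨g, rfl⟩ := MulAction.exists_smul_eq G Q P
  intro x hx
  show x ∈ (↑(g • Q) : Subgroup G)
  rw [Sylow.coe_subgroup_smul, Subgroup.mem_pointwise_smul_iff_inv_smul_mem]
  have : g⁻¹ * x * g ∈ N := by simpa using hN.conj_mem x hx g⁻¹
  simpa [MulAut.conj] using hQ this

omit [Fact p.Prime] [Finite G] in
lemma pFrattini_le_pCore : pFrattini p G ≤ pCore p G := by
  rw [pFrattini]
  apply sup_le
  · rw [Subgroup.closure_le]
    rintro _ ⟨v, hv, rfl⟩
    exact (pCore p G).pow_mem hv p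
  · exact Subgroup.commutator_le_left _ _

omit [Fact p.Prime] [Finite G] in
lemma pFrattini_isPGroup : IsPGroup p (pFrattini p G) :=
  (pCore_isPGroup' p G).to_le (pFrattini_le_pCore p G)

lemma pCore_quotient :
    pCore p (G ⧸ pFrattini p G) =
      (pCore p G).map (QuotientGroup.mk' (pFrattini p G)) := by
  set f := QuotientGroup.mk' (pFrattini p G) with hf
  have hsurj : Function.Surjective f := QuotientGroup.mk'_surjective _
  apply le_antisymm
  · have hker : IsPGroup p f.ker := by
      rw [hf, QuotientGroup.ker_mk']
      exact pFrattini_isPGroup p G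
    have hU : IsPGroup p ((pCore p (G ⧸ pFrattini p G)).comap f) :=
      (pCore_isPGroup' p _).comap_of_ker_isPGroup f hker
    have hUn : ((pCore p (G ⧸ pFrattini p G)).comap f).Normal :=
      (pCore_normal p _).comap f
    have hle := le_pCore p G hUn hU
    calc pCore p (G ⧸ pFrattini p G)
        = ((pCore p (G ⧸ pFrattini p G)).comap f).map f :=
          (Subgroup.map_comap_eq_self_of_surjective hsurj _).symm
    _ ≤ (pCore p G).map f := Subgroup.map_mono hle
  · exact le_pCore p _ ((pCore_normal p G).map f hsurj) ((pCore_isPGroup' p G).map f)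

lemma pFrattini_quotient_eq_bot :
    pFrattini p (G ⧸ pFrattini p G) = ⊥ := by
  set f := QuotientGroup.mk' (pFrattini p G) with hf
  rw [eq_bot_iff]
  refine sup_le ?_ ?_
  · rw [Subgroup.closure_le]
    rintro _ ⟨v, hv, rfl⟩
    rw [pCore_quotient] at hv
    obtain ⟨x, hx, rfl⟩ := Subgroup.mem_map.mp hv
    show (f x) ^ p ∈ (⊥ : Subgroup (G ⧸ pFrattini p G))
    rw [Subgroup.mem_bot, ← map_pow]
    refine (QuotientGroup.eq_one_iff _).mpr ?_
    exact le_sup_left (α := Subgroup G)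
      (Subgroup.subset_closure ⟨x, hx, rfl⟩)
  · rw [pCore_quotient, ← Subgroup.map_commutator, Subgroup.map_le_iff_le_comap]
    intro x hx
    have hxW : x ∈ pFrattini p G := le_sup_right (α := Subgroup G) hx
    simp only [Subgroup.mem_comap, Subgroup.mem_bot]
    exact (QuotientGroup.eq_one_iff _).mpr hxW

end Core

lemma map_tameBracket {G H : Type*} [Group G] [Group H] (f : G →* H)
    (p : ℕ) (h a : ℤ) (x y : G) :
    f (tameBracket p h a x y) = tameBracket p h a (f x) (f y) := by
  rw [tameBracket, tameBracket, map_zpow, MonoidHom.map_list_prod, List.map_map]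
  have : (⇑f ∘ fun i => x ^ h ^ (p - 1 - i) * y) =
      fun i => f x ^ h ^ (p - 1 - i) * f y := by
    funext i
    simp only [Function.comp_apply, map_mul, map_zpow]
  rw [this]

lemma not_dvd_orderOf_of_rel {p : ℕ} [hp : Fact p.Prime] {H : Type*} [Group H]
    [Finite H] {σ τ : H} (hrel : σ⁻¹ * τ * σ = τ ^ p) : ¬ p ∣ orderOf τ := by
  have key : ∀ k, σ⁻¹ ^ k * τ * σ ^ k = τ ^ (p ^ k) := by
    intro k
    induction k with
    | zero => simp
    | succ k ih =>
      have h1 : σ⁻¹ ^ (k + 1) * τ * σ ^ (k + 1) = σ⁻¹ * (σ⁻¹ ^ k * τ * σ ^ k) * σ := by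
        rw [pow_succ' σ⁻¹, pow_succ σ]; group
      rw [h1, ih]
      have h2 : σ⁻¹ * τ ^ (p ^ k) * σ = (σ⁻¹ * τ * σ) ^ (p ^ k) := by
        have := conj_pow (i := p ^ k) (a := σ⁻¹) (b := τ)
        simpa using this.symm
      rw [h2, hrel, ← pow_mul, ← pow_succ']
  have hd1 : 1 ≤ orderOf σ := orderOf_pos σ
  have hτ : τ ^ 1 = τ ^ (p ^ orderOf σ) := by
    have := key (orderOf σ)
    rw [inv_pow, pow_orderOf_eq_one, inv_one, one_mul, mul_one] at this
    rw [pow_one]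
    exact this
  have hmod : 1 ≡ p ^ orderOf σ [MOD orderOf τ] := (pow_eq_pow_iff_modEq).mp hτ
  have hdvd : orderOf τ ∣ p ^ orderOf σ - 1 :=
    (Nat.modEq_iff_dvd' (Nat.one_le_pow _ p hp.out.pos)).mp hmod
  intro hpd
  have h1 : p ∣ p ^ orderOf σ - 1 := hpd.trans hdvd
  have h2 : p ∣ p ^ orderOf σ := dvd_pow_self p (by omega)
  have : p ∣ 1 := by
    have := Nat.dvd_sub h2 h1
    rwa [Nat.sub_sub_self (Nat.one_le_pow _ p hp.out.pos)] at this
  exact hp.out.one_lt.ne' (Nat.dvd_one.mp this)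

lemma exists_lift_orderOf_not_dvd {p : ℕ} [hp : Fact p.Prime] {G H : Type*} [Group G]
    [Finite G] [Group H] {f : G →* H} (hsurj : Function.Surjective f) {τb : H}
    (hτb : ¬ p ∣ orderOf τb) : ∃ τ : G, f τ = τb ∧ ¬ p ∣ orderOf τ := by
  obtain ⟨τ', rfl⟩ := hsurj τb
  have hn0 : orderOf τ' ≠ 0 := (orderOf_pos τ').ne'
  have hnq : p ^ ((orderOf τ').factorization p) * (orderOf τ' / p ^ ((orderOf τ').factorization p)) = orderOf τ' :=
    Nat.ordProj_mul_ordCompl_eq_self (orderOf τ') p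
  have hpq : ¬ p ∣ orderOf τ' / p ^ ((orderOf τ').factorization p) :=
    Nat.not_dvd_ordCompl hp.out hn0
  have hcop : Nat.Coprime (p ^ ((orderOf τ').factorization p))
      (orderOf τ' / p ^ ((orderOf τ').factorization p)) :=
    Nat.Coprime.pow_left _ ((Nat.Prime.coprime_iff_not_dvd hp.out).mpr hpq)
  obtain ⟨e, he1, he2⟩ := Nat.chineseRemainder hcop 0 1
  have hmn : orderOf (f τ') ∣ orderOf τ' := orderOf_map_dvd f τ'
  have hmq : orderOf (f τ') ∣ orderOf τ' / p ^ ((orderOf τ').factorization p) := by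
    have hpm : Nat.Coprime (orderOf (f τ')) (p ^ ((orderOf τ').factorization p)) :=
      Nat.Coprime.pow_right _ ((Nat.Prime.coprime_iff_not_dvd hp.out).mpr hτb).symm
    refine Nat.Coprime.dvd_of_dvd_mul_right hpm ?_
    rw [← hnq] at hmn
    rwa [mul_comm] at hmn
  refine ⟨τ' ^ e, ?_, ?_⟩
  · rw [map_pow]
    have : e ≡ 1 [MOD orderOf (f τ')] := Nat.ModEq.of_dvd hmq he2
    calc (f τ') ^ e = (f τ') ^ 1 := pow_eq_pow_iff_modEq.mpr this
    _ = f τ' := pow_one _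
  · have hord : orderOf (τ' ^ e) ∣ orderOf τ' / p ^ ((orderOf τ').factorization p) := by
      rw [orderOf_dvd_iff_pow_eq_one, ← pow_mul]
      apply orderOf_dvd_iff_pow_eq_one.mp
      have hse : (p ^ ((orderOf τ').factorization p) : ℕ) ∣ e :=
        (Nat.modEq_zero_iff_dvd).mp he1
      calc orderOf τ' = p ^ ((orderOf τ').factorization p) *
            (orderOf τ' / p ^ ((orderOf τ').factorization p)) := hnq.symm
      _ ∣ e * (orderOf τ' / p ^ ((orderOf τ').factorization p)) :=
        mul_dvd_mul_right hse _
    exact fun hd => hpq (hd.trans hord)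

lemma exists_lift_pair (p : ℕ) [Fact p.Prime] {G : Type*} [Group G] [Finite G]
    {σb τb : G ⧸ pFrattini p G} (hrel : σb⁻¹ * τb * σb = τb ^ p) :
    ∃ σ τ : G, QuotientGroup.mk' (pFrattini p G) σ = σb ∧
      QuotientGroup.mk' (pFrattini p G) τ = τb ∧ σ⁻¹ * τ * σ = τ ^ p := by
  set f := QuotientGroup.mk' (pFrattini p G) with hf
  have hsurj : Function.Surjective f := QuotientGroup.mk'_surjective _
  have hτb : ¬ p ∣ orderOf τb := not_dvd_orderOf_of_rel hrel
  obtain ⟨τ, hτ, hτp⟩ := exists_lift_orderOf_not_dvd hsurj hτb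
  obtain ⟨σ₀, hσ₀⟩ := hsurj σb
  set t := σ₀⁻¹ * τ * σ₀ with ht
  have hmem : τ ^ p * t⁻¹ ∈ pFrattini p G := by
    refine (QuotientGroup.eq_one_iff _).mp ?_
    show f (τ ^ p * t⁻¹) = 1
    rw [map_mul, map_inv, map_pow, ht, map_mul, map_mul, map_inv, hσ₀, hτ, hrel]
    group
  have hordt : orderOf t = orderOf τ := by
    have := orderOf_injective (MulAut.conj σ₀⁻¹).toMonoidHom (MulAut.conj σ₀⁻¹).injective τ
    simpa [MulAut.conj_apply, ht, mul_assoc] using this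
  have htp2 : ¬ p ∣ orderOf t := by rwa [hordt]
  have hsp2 : ¬ p ∣ orderOf (τ ^ p) := fun hd => hτp (hd.trans (orderOf_pow_dvd p))
  obtain ⟨w, hwW, hw⟩ := conj_lift p (pFrattini p G) inferInstance
    (pFrattini_isPGroup p G) hmem htp2 hsp2
  refine ⟨σ₀ * w⁻¹, τ, ?_, hτ, ?_⟩
  · rw [map_mul, map_inv, hσ₀]
    have : f w = 1 := (QuotientGroup.eq_one_iff _).mpr hwW
    rw [this]; group
  · have : (σ₀ * w⁻¹)⁻¹ * τ * (σ₀ * w⁻¹) = w * t * w⁻¹ := by rw [ht]; group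
    rw [this, hw]


/-- `G` is `x₀`-constrained if and only if `G/W` is `x₀`-constrained. -/
theorem xConstrained_iff_quotient (p : ℕ) [Fact p.Prime] (hodd : Odd p)
    (G : Type*) [Group G] [Finite G] (u r : ℕ)
    (hcard : Nat.card G = u * p ^ r) (hu : ¬ p ∣ u)
    (h a : ℤ)
    (ha0 : a ≡ 0 [ZMOD (u : ℤ)])
    (ha1 : ((p : ℤ) - 1) * a ≡ 1 [ZMOD ((p : ℤ) ^ r)])
    (hh : h ^ (p - 1) ≡ 1 [ZMOD ((p : ℤ) ^ r)])
    (hord : orderOf (h : ZMod p) = p - 1) :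
    IsXConstrained p h a G ↔ IsXConstrained p h a (G ⧸ pFrattini p G) := by
  set f := QuotientGroup.mk' (pFrattini p G) with hfdef
  have hsurj : Function.Surjective f := QuotientGroup.mk'_surjective _
  have hVmap := pCore_quotient p G
  have hWbot := pFrattini_quotient_eq_bot p G
  have hexpr : ∀ σ τ x₀ : G,
      f (σ⁻¹ * x₀ * σ * (tameBracket p h a x₀ τ)⁻¹) =
        (f σ)⁻¹ * f x₀ * f σ * (tameBracket p h a (f x₀) (f τ))⁻¹ := by
    intro σ τ x₀
    rw [map_mul, map_inv, map_mul, map_mul, map_inv, map_tameBracket]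
  have hcl : ∀ σ τ : G,
      Subgroup.closure {f σ, f τ} = (Subgroup.closure {σ, τ}).map f := by
    intro σ τ
    rw [MonoidHom.map_closure]
    congr 1
    rw [Set.image_insert_eq, Set.image_singleton]
  constructor
  · intro hG σb τb hmem xb hxb hrel
    obtain ⟨σ, τ, hσ, hτ, hrelG⟩ := exists_lift_pair p hmem.1
    rw [hVmap] at hxb
    obtain ⟨x₀, hx₀, rfl⟩ := Subgroup.mem_map.mp hxb
    rw [hWbot, Subgroup.mem_bot, ← hσ, ← hτ, ← hexpr] at hrel
    have hmemW : σ⁻¹ * x₀ * σ * (tameBracket p h a x₀ τ)⁻¹ ∈ pFrattini p G :=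
      (QuotientGroup.eq_one_iff _).mp hrel
    have hgen : Subgroup.closure {σ, τ} ⊔ pCore p G = ⊤ := by
      have h2 := hmem.2
      rw [hVmap, ← hσ, ← hτ, hcl, ← Subgroup.map_sup] at h2
      have h3 := congrArg (Subgroup.comap f) h2
      rw [Subgroup.comap_map_eq, Subgroup.comap_top] at h3
      have hker : f.ker ≤ Subgroup.closure {σ, τ} ⊔ pCore p G := by
        rw [hfdef, QuotientGroup.ker_mk']
        exact (pFrattini_le_pCore p G).trans le_sup_right
      rwa [sup_eq_left.mpr hker] at h3
    have hx₀W := hG σ τ ⟨hrelG, hgen⟩ x₀ hx₀ hmemW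
    rw [hWbot, Subgroup.mem_bot]
    exact (QuotientGroup.eq_one_iff _).mpr hx₀W
  · intro hQ σ τ hmem x₀ hx₀ hmemW
    have hmemQ : MemTG p (f σ) (f τ) := by
      constructor
      · rw [← map_inv, ← map_mul, ← map_mul, hmem.1, map_pow]
      · have h2 := congrArg (Subgroup.map f) hmem.2
        rw [Subgroup.map_sup, Subgroup.map_top_of_surjective f hsurj] at h2
        rw [hcl, hVmap]
        exact h2
    have hxQ : f x₀ ∈ pCore p (G ⧸ pFrattini p G) := by
      rw [hVmap]
      exact Subgroup.mem_map.mpr ⟨x₀, hx₀, rfl⟩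
    have hrelQ : (f σ)⁻¹ * f x₀ * f σ * (tameBracket p h a (f x₀) (f τ))⁻¹ ∈
        pFrattini p (G ⧸ pFrattini p G) := by
      have h1 : f (σ⁻¹ * x₀ * σ * (tameBracket p h a x₀ τ)⁻¹) = 1 :=
        (QuotientGroup.eq_one_iff _).mpr hmemW
      rw [← hexpr, h1]
      exact Subgroup.one_mem _
    have hfin := hQ (f σ) (f τ) hmemQ (f x₀) hxQ hrelQ
    rw [hWbot, Subgroup.mem_bot] at hfin
    exact (QuotientGroup.eq_one_iff _).mp hfin
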